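/- Let q >= 3, d > q, n >= d+2. Consider the graph G with a (q-3)-clique C, an independent set I of size d-q+1, a complete bipartite graph between C and I, vertices u and v each adjacent to all of C ∪ I, a path w_1,...,w_{n-d-1}, a vertex w, and edges {v, w} and {v, w_1}. Then the number of proper q-colorings of G with sigma(u) != sigma(v) is q! (q-1)^{n-d}, and the number with sigma(u) = sigma(v) is q! (q-1)^{n-d} 2^{d-q}. -/
import Mathlib

/-- Vertices: the (q-3)-clique C (`inl`), the independent set I of size d-q+1
(`inr inl`), the three vertices u, v, w (`inr (inr (inl 0/1/2))`), and the
path w_1, …, w_{n-d-1} (`inr (inr (inr k))`, with w_1 ↦ k = 0). -/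
abbrev V13 (q d n : ℕ) := Fin (q - 3) ⊕ (Fin (d - q + 1) ⊕ (Fin 3 ⊕ Fin (n - d - 1)))

/-- Relation: all pairs within C; complete bipartite C–I; u and v joined to all of C ∪ I;
the edges {v,w} and {v,w_1}; and consecutive path edges. -/
def g13Rel (q d n : ℕ) : V13 q d n → V13 q d n → Prop
  | Sum.inl _, Sum.inl _ => True
  | Sum.inl _, Sum.inr (Sum.inl _) => True
  | Sum.inl _, Sum.inr (Sum.inr (Sum.inl z)) => z = 0 ∨ z = 1
  | Sum.inr (Sum.inl _), Sum.inr (Sum.inr (Sum.inl z)) => z = 0 ∨ z = 1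
  | Sum.inr (Sum.inr (Sum.inl z)), Sum.inr (Sum.inr (Sum.inl z')) => z = 1 ∧ z' = 2
  | Sum.inr (Sum.inr (Sum.inl z)), Sum.inr (Sum.inr (Sum.inr k)) => z = 1 ∧ (k : ℕ) = 0
  | Sum.inr (Sum.inr (Sum.inr k)), Sum.inr (Sum.inr (Sum.inr l)) => (k : ℕ) + 1 = (l : ℕ)
  | _, _ => False

def g13 (q d n : ℕ) : SimpleGraph (V13 q d n) := SimpleGraph.fromRel (g13Rel q d n)

/-- A proper `q`-coloring. -/
def IsProperColoring {V : Type} (q : ℕ) (G : SimpleGraph V) (σ : V → Fin q) : Prop :=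
  ∀ u v : V, G.Adj u v → σ u ≠ σ v

/-! ### Auxiliary counting lemmas -/

lemma card_notMem {q : ℕ} (s : Finset (Fin q)) :
    Nat.card {x : Fin q // x ∉ s} = q - s.card := by
  classical
  rw [Nat.card_eq_fintype_card]
  have h : Fintype.card {x : Fin q // x ∉ s} =
      Fintype.card (Fin q) - Fintype.card {x : Fin q // x ∈ s} :=
    Fintype.card_subtype_compl _
  rw [h, Fintype.card_fin]
  congr 1
  simp [Fintype.card_subtype]

lemma card_ne {q : ℕ} (c : Fin q) : Nat.card {x : Fin q // c ≠ x} = q - 1 := by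
  classical
  rw [Nat.card_congr (Equiv.subtypeEquivRight (q := fun x => x ∉ ({c} : Finset (Fin q)))
    (fun x => by simp [eq_comm]))]
  rw [card_notMem]
  simp

def PathCond {q m : ℕ} (c : Fin q) (p : Fin m → Fin q) : Prop :=
  (∀ k : Fin m, (k:ℕ) = 0 → c ≠ p k) ∧ ∀ k l : Fin m, (k:ℕ) + 1 = (l:ℕ) → p k ≠ p l

def pathStep {q m : ℕ} (c : Fin q) :
    {p : Fin (m+1) → Fin q // PathCond c p} ≃
      {xp : Fin q × (Fin m → Fin q) // c ≠ xp.1 ∧ PathCond xp.1 xp.2} where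
  toFun ph := ⟨(ph.1 0, fun k => ph.1 k.succ),
    ph.2.1 0 rfl,
    fun k hk => ph.2.2 0 k.succ (by simp [hk]),
    fun k l hkl => ph.2.2 k.succ l.succ (by simp [hkl])⟩
  invFun s := ⟨Fin.cons s.1.1 s.1.2, by
    obtain ⟨⟨x, p⟩, hx, hp1, hp2⟩ := s
    constructor
    · intro k hk
      have hk0 : k = 0 := Fin.ext hk
      subst hk0
      simpa using hx
    · intro k l hkl
      induction k using Fin.cases with
      | zero =>
        induction l using Fin.cases with
        | zero => simp at hkl
        | succ l' =>
          have hl : (l' : ℕ) = 0 := by simpa using hkl.symm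
          simpa using hp1 l' hl
      | succ k' =>
        induction l using Fin.cases with
        | zero => simp at hkl
        | succ l' =>
          have h' : (k' : ℕ) + 1 = (l' : ℕ) := by simpa using hkl
          simpa using hp2 k' l' h'⟩
  left_inv ph := Subtype.ext (Fin.cons_self_tail ph.1)
  right_inv s := by
    obtain ⟨⟨x, p⟩, h⟩ := s
    refine Subtype.ext (Prod.ext ?_ ?_)
    · exact Fin.cons_zero (α := fun _ : Fin (m+1) => Fin q) x p
    · exact funext fun k => Fin.cons_succ (α := fun _ : Fin (m+1) => Fin q) x p k

lemma card_dep_prod {α β : Type} [Fintype α] [Fintype β]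
    (P : α → Prop) (Q : α → β → Prop) (k : ℕ)
    (hk : ∀ a, P a → Nat.card {b // Q a b} = k) :
    Nat.card {x : α × β // P x.1 ∧ Q x.1 x.2} = Nat.card {a // P a} * k := by
  classical
  rw [Nat.card_congr (Equiv.subtypeProdEquivSigmaSubtype (fun a b => P a ∧ Q a b)),
    Nat.card_eq_fintype_card, Fintype.card_sigma]
  have h : ∀ a : α, Fintype.card {b // P a ∧ Q a b} = if P a then k else 0 := by
    intro a
    by_cases hPa : P a
    · rw [if_pos hPa, ← Nat.card_eq_fintype_card,
        Nat.card_congr (Equiv.subtypeEquivRight (q := fun b => Q a b) (fun b => by simp [hPa]))]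
      exact hk a hPa
    · rw [if_neg hPa]
      rw [Fintype.card_eq_zero_iff]
      exact ⟨fun b => hPa b.2.1⟩
  rw [Finset.sum_congr rfl (fun a _ => h a), Finset.sum_ite, Finset.sum_const,
    Finset.sum_const, Nat.card_eq_fintype_card, Fintype.card_subtype]
  simp [mul_comm]

lemma pathCard {q : ℕ} : ∀ (m : ℕ) (c : Fin q),
    Nat.card {p : Fin m → Fin q // PathCond c p} = (q - 1) ^ m := by
  intro m
  induction m with
  | zero =>
    intro c
    have e : {p : Fin 0 → Fin q // PathCond c p} ≃ (Fin 0 → Fin q) :=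
      Equiv.subtypeUnivEquiv (fun p => ⟨fun k => k.elim0, fun k => k.elim0⟩)
    rw [Nat.card_congr e]
    simp
  | succ m ih =>
    intro c
    classical
    rw [Nat.card_congr (pathStep c),
      card_dep_prod (fun x => c ≠ x) (fun x p => PathCond x p) ((q-1)^m) (fun x _ => ih x)]
    rw [card_ne, pow_succ, mul_comm]

lemma card_pi_subtype {q t : ℕ} (P : Fin q → Prop) :
    Nat.card {f : Fin t → Fin q // ∀ j, P (f j)} = (Nat.card {x : Fin q // P x}) ^ t := by
  classical
  rw [Nat.card_congr (Equiv.subtypePiEquivPi (p := fun _ : Fin t => P))]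
  simp [Nat.card_pi]

lemma card_inj {c q : ℕ} :
    Nat.card {f : Fin c → Fin q // Function.Injective f} = q.descFactorial c := by
  classical
  rw [Nat.card_congr (Equiv.subtypeInjectiveEquivEmbedding (Fin c) (Fin q))]
  rw [Nat.card_eq_fintype_card, Fintype.card_embedding_eq]
  simp

/-! ### Decomposing properness -/

lemma proper_iff (q d n : ℕ) (σ : V13 q d n → Fin q) :
    IsProperColoring q (g13 q d n) σ ↔
      (∀ i i' : Fin (q-3), i ≠ i' → σ (.inl i) ≠ σ (.inl i')) ∧
      (∀ i j, σ (.inl i) ≠ σ (.inr (.inl j))) ∧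
      (∀ i, σ (.inl i) ≠ σ (.inr (.inr (.inl 0))) ∧ σ (.inl i) ≠ σ (.inr (.inr (.inl 1)))) ∧
      (∀ j, σ (.inr (.inl j)) ≠ σ (.inr (.inr (.inl 0))) ∧
        σ (.inr (.inl j)) ≠ σ (.inr (.inr (.inl 1)))) ∧
      (σ (.inr (.inr (.inl 1))) ≠ σ (.inr (.inr (.inl 2)))) ∧
      PathCond (σ (.inr (.inr (.inl 1)))) (fun k => σ (.inr (.inr (.inr k)))) := by
  constructor
  · intro h
    have adj : ∀ x y : V13 q d n, x ≠ y → g13Rel q d n x y → σ x ≠ σ y := by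
      intro x y hne hrel
      exact h x y ⟨hne, Or.inl hrel⟩
    refine ⟨fun i i' hii => adj _ _ (by simp [hii]) trivial,
      fun i j => adj _ _ (by simp) trivial,
      fun i => ⟨adj _ _ (by simp) (Or.inl rfl), adj _ _ (by simp) (Or.inr rfl)⟩,
      fun j => ⟨adj _ _ (by simp) (Or.inl rfl), adj _ _ (by simp) (Or.inr rfl)⟩,
      adj _ _ (by simp) ⟨rfl, rfl⟩,
      fun k hk => adj _ _ (by simp) ⟨rfl, hk⟩,
      fun k l hkl => adj _ _ (by simp; omega) hkl⟩
  · rintro ⟨h1, h2, h3, h4, h5, h6, h7⟩ x y hadj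
    rw [g13] at hadj
    rw [SimpleGraph.fromRel_adj] at hadj
    obtain ⟨hne, hrel⟩ := hadj
    have key : ∀ a b : V13 q d n, a ≠ b → g13Rel q d n a b → σ a ≠ σ b := by
      intro a b hab hrel
      match a, b with
      | .inl i, .inl i' => exact h1 i i' (fun c => hab (by rw [c]))
      | .inl i, .inr (.inl j) => exact h2 i j
      | .inl i, .inr (.inr (.inl z)) =>
        rcases hrel with rfl | rfl
        · exact (h3 i).1
        · exact (h3 i).2
      | .inr (.inl j), .inr (.inr (.inl z)) =>
        rcases hrel with rfl | rfl
        · exact (h4 j).1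
        · exact (h4 j).2
      | .inr (.inr (.inl z)), .inr (.inr (.inl z')) =>
        obtain ⟨rfl, rfl⟩ := hrel
        exact h5
      | .inr (.inr (.inl z)), .inr (.inr (.inr k)) =>
        obtain ⟨rfl, hk⟩ := hrel
        exact h6 k hk
      | .inr (.inr (.inr k)), .inr (.inr (.inr l)) => exact h7 k l hrel
      | .inr (.inl _), .inl _ => exact hrel.elim
      | .inr (.inl _), .inr (.inl _) => exact hrel.elim
      | .inr (.inr (.inl _)), .inl _ => exact hrel.elim
      | .inr (.inr (.inr _)), .inl _ => exact hrel.elim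
      | .inr (.inr (.inl _)), .inr (.inl _) => exact hrel.elim
      | .inr (.inr (.inr _)), .inr (.inl _) => exact hrel.elim
      | .inr (.inr (.inr _)), .inr (.inr (.inl _)) => exact hrel.elim
      | .inl _, .inr (.inr (.inr _)) => exact hrel.elim
    rcases hrel with hr | hr
    · exact key x y hne hr
    · exact (key y x (Ne.symm hne) hr).symm

/-! ### The structural equivalence -/

abbrev CoreT (q : ℕ) := (Fin (q-3) → Fin q) × (Fin q × Fin q)
abbrev FibT (q d n : ℕ) := (Fin (d-q+1) → Fin q) × (Fin q × (Fin (n-d-1) → Fin q))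

def CoreP {q : ℕ} (R : Fin q → Fin q → Prop) (c : CoreT q) : Prop :=
  Function.Injective c.1 ∧ ((∀ i, c.1 i ≠ c.2.1) ∧ ((∀ i, c.1 i ≠ c.2.2) ∧ R c.2.1 c.2.2))

def FibP {q d n : ℕ} (c : CoreT q) (f : FibT q d n) : Prop :=
  (∀ j, (∀ i, c.1 i ≠ f.1 j) ∧ f.1 j ≠ c.2.1 ∧ f.1 j ≠ c.2.2) ∧
  (c.2.2 ≠ f.2.1 ∧ PathCond c.2.2 f.2.2)

def recolor {q d n : ℕ} (t : CoreT q × FibT q d n) : V13 q d n → Fin q := fun x =>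
  match x with
  | .inl i => t.1.1 i
  | .inr (.inl j) => t.2.1 j
  | .inr (.inr (.inl z)) => if z = 0 then t.1.2.1 else if z = 1 then t.1.2.2 else t.2.2.1
  | .inr (.inr (.inr k)) => t.2.2.2 k

def bigEquiv (q d n : ℕ) (R : Fin q → Fin q → Prop) :
    {σ : V13 q d n → Fin q // IsProperColoring q (g13 q d n) σ ∧
        R (σ (.inr (.inr (.inl 0)))) (σ (.inr (.inr (.inl 1))))} ≃
    {t : CoreT q × FibT q d n // CoreP R t.1 ∧ FibP t.1 t.2} where
  toFun σh := ⟨((fun i => σh.1 (.inl i), (σh.1 (.inr (.inr (.inl 0))), σh.1 (.inr (.inr (.inl 1))))),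
      (fun j => σh.1 (.inr (.inl j)),
        (σh.1 (.inr (.inr (.inl 2))), fun k => σh.1 (.inr (.inr (.inr k)))))), by
    obtain ⟨h1, h2, h3, h4, h5, h6⟩ := (proper_iff q d n σh.1).mp σh.2.1
    refine ⟨⟨?_, fun i => (h3 i).1, fun i => (h3 i).2, σh.2.2⟩,
      fun j => ⟨fun i => h2 i j, (h4 j).1, (h4 j).2⟩, h5, h6⟩
    intro i i' hee
    by_contra hne
    exact h1 i i' hne hee⟩
  invFun th := ⟨recolor th.1, by
    obtain ⟨⟨hinj, hu, hv, hR⟩, hb, hw, hp⟩ := th.2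
    constructor
    · rw [proper_iff]
      refine ⟨fun i i' hii => hinj.ne hii, fun i j => (hb j).1 i, ?_, ?_, ?_, ?_⟩
      · intro i
        refine ⟨?_, ?_⟩
        · simpa [recolor] using hu i
        · simpa [recolor] using hv i
      · intro j
        refine ⟨?_, ?_⟩
        · simpa [recolor] using (hb j).2.1
        · simpa [recolor] using (hb j).2.2
      · simpa [recolor] using hw
      · simpa [recolor] using hp
    · simpa [recolor] using hR⟩
  left_inv σh := by
    apply Subtype.ext
    funext x
    match x with
    | .inl i => rfl
    | .inr (.inl j) => rfl
    | .inr (.inr (.inl z)) =>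
      show (if z = 0 then _ else if z = 1 then _ else _) = σh.1 (.inr (.inr (.inl z)))
      fin_cases z <;> simp
    | .inr (.inr (.inr k)) => rfl
  right_inv th := by
    apply Subtype.ext
    refine Prod.ext (Prod.ext rfl (Prod.ext ?_ ?_)) (Prod.ext rfl (Prod.ext ?_ rfl)) <;>
      simp [recolor]

/-! ### Cardinality computations -/

lemma allowed_card {q : ℕ} (hq : 3 ≤ q) (a : Fin (q-3) → Fin q) (ha : Function.Injective a)
    (u' v' : Fin q) (hu : ∀ i, a i ≠ u') (hv : ∀ i, a i ≠ v') :
    (u' ≠ v' → Nat.card {x : Fin q // (∀ i, a i ≠ x) ∧ x ≠ u' ∧ x ≠ v'} = 1) ∧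
    (u' = v' → Nat.card {x : Fin q // (∀ i, a i ≠ x) ∧ x ≠ u' ∧ x ≠ v'} = 2) := by
  classical
  have key : ∀ (F : Finset (Fin q)), (∀ x, ((∀ i, a i ≠ x) ∧ x ≠ u' ∧ x ≠ v') ↔ x ∉ F) →
      Nat.card {x : Fin q // (∀ i, a i ≠ x) ∧ x ≠ u' ∧ x ≠ v'} = q - F.card := by
    intro F hF
    rw [Nat.card_congr (Equiv.subtypeEquivRight (q := fun x => x ∉ F) hF), card_notMem]
  have him : (Finset.image a Finset.univ).card = q - 3 := by
    rw [Finset.card_image_of_injective _ ha, Finset.card_univ, Fintype.card_fin]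
  constructor
  · intro huv
    have h1 : ∀ x : Fin q, ((∀ i, a i ≠ x) ∧ x ≠ u' ∧ x ≠ v') ↔
        x ∉ insert u' (insert v' (Finset.image a Finset.univ)) := by
      intro x
      simp only [Finset.mem_insert, Finset.mem_image, Finset.mem_univ, true_and, not_or,
        not_exists]
      constructor
      · rintro ⟨h, h2, h3⟩
        exact ⟨h2, h3, fun i => h i⟩
      · rintro ⟨h2, h3, h⟩
        exact ⟨fun i => h i, h2, h3⟩
    rw [key _ h1, Finset.card_insert_of_notMem, Finset.card_insert_of_notMem, him]
    · omega
    · simp only [Finset.mem_image, Finset.mem_univ, true_and, not_exists]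
      exact fun i => hv i
    · simp only [Finset.mem_insert, Finset.mem_image, Finset.mem_univ, true_and, not_or,
        not_exists]
      exact ⟨huv, fun i => hu i⟩
  · intro huv
    subst huv
    have h1 : ∀ x : Fin q, ((∀ i, a i ≠ x) ∧ x ≠ u' ∧ x ≠ u') ↔
        x ∉ insert u' (Finset.image a Finset.univ) := by
      intro x
      simp only [Finset.mem_insert, Finset.mem_image, Finset.mem_univ, true_and, not_or,
        not_exists, and_self]
      constructor
      · rintro ⟨h, h2⟩
        exact ⟨h2, fun i => h i⟩
      · rintro ⟨h2, h⟩
        exact ⟨fun i => h i, h2⟩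
    rw [key _ h1, Finset.card_insert_of_notMem, him]
    · omega
    · simp only [Finset.mem_image, Finset.mem_univ, true_and, not_exists]
      exact fun i => hu i

lemma notMem_image_card {q : ℕ} (hq : 3 ≤ q) (a : Fin (q-3) → Fin q)
    (ha : Function.Injective a) :
    Nat.card {x : Fin q // ∀ i, a i ≠ x} = 3 := by
  classical
  rw [Nat.card_congr (Equiv.subtypeEquivRight
    (q := fun x => x ∉ Finset.image a Finset.univ) (fun x => by
      simp [not_exists])), card_notMem,
    Finset.card_image_of_injective _ ha, Finset.card_univ, Fintype.card_fin]
  omega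

lemma pair_avoid_card_ne {q : ℕ} (hq : 3 ≤ q) (a : Fin (q-3) → Fin q)
    (ha : Function.Injective a) (u' : Fin q) (hu : ∀ i, a i ≠ u') :
    Nat.card {v' : Fin q // (∀ i, a i ≠ v') ∧ u' ≠ v'} = 2 := by
  classical
  rw [Nat.card_congr (Equiv.subtypeEquivRight
    (q := fun x => x ∉ insert u' (Finset.image a Finset.univ)) (fun x => by
      simp only [Finset.mem_insert, Finset.mem_image, Finset.mem_univ, true_and, not_or,
        not_exists]
      constructor
      · intro h
        exact ⟨fun c => h.2 c.symm, fun i => h.1 i⟩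
      · intro h
        exact ⟨fun i => h.2 i, fun c => h.1 c.symm⟩)), card_notMem,
    Finset.card_insert_of_notMem, Finset.card_image_of_injective _ ha,
    Finset.card_univ, Fintype.card_fin]
  · omega
  · simp only [Finset.mem_image, Finset.mem_univ, true_and, not_exists]
    exact fun i => hu i

lemma pair_avoid_card_eq {q : ℕ} (a : Fin (q-3) → Fin q) (u' : Fin q) (hu : ∀ i, a i ≠ u') :
    Nat.card {v' : Fin q // (∀ i, a i ≠ v') ∧ u' = v'} = 1 := by
  classical
  rw [Nat.card_congr (Equiv.subtypeEquivRight (q := fun x => x = u') (fun x => by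
    constructor
    · rintro ⟨_, h⟩
      exact h.symm
    · rintro rfl
      exact ⟨hu, rfl⟩))]
  rw [Nat.card_eq_fintype_card, Fintype.card_subtype_eq]

lemma fib_card {q d n : ℕ} (hq : 3 ≤ q) (c : CoreT q) (A : ℕ)
    (hA : Nat.card {x : Fin q // (∀ i, c.1 i ≠ x) ∧ x ≠ c.2.1 ∧ x ≠ c.2.2} = A) :
    Nat.card {f : FibT q d n // FibP c f} =
      A ^ (d-q+1) * ((q-1) * (q-1) ^ (n-d-1)) := by
  classical
  rw [show {f : FibT q d n // FibP c f} =
    {f : FibT q d n // (∀ j, (∀ i, c.1 i ≠ f.1 j) ∧ f.1 j ≠ c.2.1 ∧ f.1 j ≠ c.2.2) ∧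
      (c.2.2 ≠ f.2.1 ∧ PathCond c.2.2 f.2.2)} from rfl]
  rw [Nat.card_congr (Equiv.subtypeProdEquivProd
    (p := fun b : Fin (d-q+1) → Fin q => ∀ j, (∀ i, c.1 i ≠ b j) ∧ b j ≠ c.2.1 ∧ b j ≠ c.2.2)
    (q := fun wp : Fin q × (Fin (n-d-1) → Fin q) => c.2.2 ≠ wp.1 ∧ PathCond c.2.2 wp.2))]
  rw [Nat.card_prod]
  congr 1
  · rw [card_pi_subtype (fun x => (∀ i, c.1 i ≠ x) ∧ x ≠ c.2.1 ∧ x ≠ c.2.2), hA]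
  · rw [Nat.card_congr (Equiv.subtypeProdEquivProd
      (p := fun w : Fin q => c.2.2 ≠ w)
      (q := fun p : Fin (n-d-1) → Fin q => PathCond c.2.2 p))]
    rw [Nat.card_prod, card_ne, pathCard]

lemma fact_eq_six {q : ℕ} (hq : 3 ≤ q) :
    q.factorial = 6 * q.descFactorial (q-3) := by
  obtain ⟨c, rfl⟩ : ∃ c, q = c + 3 := ⟨q - 3, by omega⟩
  have h3 : c + 3 - 3 = c := by omega
  rw [h3, ← Nat.descFactorial_self (c+3)]
  show (c+3).descFactorial (c+2+1) = _
  rw [Nat.descFactorial_succ]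
  show _ * (c+3).descFactorial (c+1+1) = _
  rw [Nat.descFactorial_succ]
  show _ * (_ * (c+3).descFactorial (c+1)) = _
  rw [Nat.descFactorial_succ]
  have e1 : c+3-(c+2) = 1 := by omega
  have e2 : c+3-(c+1) = 2 := by omega
  have e3 : c+3-c = 3 := by omega
  rw [e1, e2, e3]
  ring


lemma core_card_ne {q : ℕ} (hq : 3 ≤ q) :
    Nat.card {c : CoreT q // CoreP (fun x y : Fin q => x ≠ y) c} =
      q.descFactorial (q-3) * 6 := by
  classical
  have h6 : ∀ a : Fin (q-3) → Fin q, Function.Injective a →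
      Nat.card {uv : Fin q × Fin q //
        (∀ i, a i ≠ uv.1) ∧ ((∀ i, a i ≠ uv.2) ∧ uv.1 ≠ uv.2)} = 6 := by
    intro a ha
    have inner : ∀ u' : Fin q, (∀ i, a i ≠ u') →
        Nat.card {v' : Fin q // (∀ i, a i ≠ v') ∧ u' ≠ v'} = 2 :=
      fun u' hu => pair_avoid_card_ne hq a ha u' hu
    have m2 := card_dep_prod (fun u' : Fin q => ∀ i, a i ≠ u')
      (fun u' v' => (∀ i, a i ≠ v') ∧ u' ≠ v') 2 inner
    calc Nat.card {uv : Fin q × Fin q //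
          (∀ i, a i ≠ uv.1) ∧ ((∀ i, a i ≠ uv.2) ∧ uv.1 ≠ uv.2)}
        = Nat.card {u' : Fin q // ∀ i, a i ≠ u'} * 2 := m2
      _ = 6 := by rw [notMem_image_card hq a ha]
  have main := card_dep_prod (fun a : Fin (q-3) → Fin q => Function.Injective a)
    (fun (a : Fin (q-3) → Fin q) (uv : Fin q × Fin q) =>
      (∀ i, a i ≠ uv.1) ∧ ((∀ i, a i ≠ uv.2) ∧ uv.1 ≠ uv.2)) 6 h6
  calc Nat.card {c : CoreT q // CoreP (fun x y : Fin q => x ≠ y) c}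
      = Nat.card {a : Fin (q-3) → Fin q // Function.Injective a} * 6 := main
    _ = q.descFactorial (q-3) * 6 := by rw [card_inj]

lemma core_card_eq {q : ℕ} (hq : 3 ≤ q) :
    Nat.card {c : CoreT q // CoreP (fun x y : Fin q => x = y) c} =
      q.descFactorial (q-3) * 3 := by
  classical
  have h3 : ∀ a : Fin (q-3) → Fin q, Function.Injective a →
      Nat.card {uv : Fin q × Fin q //
        (∀ i, a i ≠ uv.1) ∧ ((∀ i, a i ≠ uv.2) ∧ uv.1 = uv.2)} = 3 := by
    intro a ha
    have inner : ∀ u' : Fin q, (∀ i, a i ≠ u') →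
        Nat.card {v' : Fin q // (∀ i, a i ≠ v') ∧ u' = v'} = 1 :=
      fun u' hu => pair_avoid_card_eq a u' hu
    have m2 := card_dep_prod (fun u' : Fin q => ∀ i, a i ≠ u')
      (fun u' v' => (∀ i, a i ≠ v') ∧ u' = v') 1 inner
    calc Nat.card {uv : Fin q × Fin q //
          (∀ i, a i ≠ uv.1) ∧ ((∀ i, a i ≠ uv.2) ∧ uv.1 = uv.2)}
        = Nat.card {u' : Fin q // ∀ i, a i ≠ u'} * 1 := m2
      _ = 3 := by rw [notMem_image_card hq a ha]
  have main := card_dep_prod (fun a : Fin (q-3) → Fin q => Function.Injective a)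
    (fun (a : Fin (q-3) → Fin q) (uv : Fin q × Fin q) =>
      (∀ i, a i ≠ uv.1) ∧ ((∀ i, a i ≠ uv.2) ∧ uv.1 = uv.2)) 3 h3
  calc Nat.card {c : CoreT q // CoreP (fun x y : Fin q => x = y) c}
      = Nat.card {a : Fin (q-3) → Fin q // Function.Injective a} * 3 := main
    _ = q.descFactorial (q-3) * 3 := by rw [card_inj]

/-- For 3 ≤ q < d and n ≥ d+2: the number of proper q-colorings of G with σ(u) ≠ σ(v)
is q!(q-1)^{n-d}, and the number with σ(u) = σ(v) is q!(q-1)^{n-d} 2^{d-q}. -/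
theorem stmt13 (q d n : ℕ) (hq : 3 ≤ q) (hd : q < d) (hn : d + 2 ≤ n) :
    {σ : V13 q d n → Fin q | IsProperColoring q (g13 q d n) σ ∧
        σ (Sum.inr (Sum.inr (Sum.inl 0))) ≠ σ (Sum.inr (Sum.inr (Sum.inl 1)))}.ncard =
      Nat.factorial q * (q - 1) ^ (n - d) ∧
    {σ : V13 q d n → Fin q | IsProperColoring q (g13 q d n) σ ∧
        σ (Sum.inr (Sum.inr (Sum.inl 0))) = σ (Sum.inr (Sum.inr (Sum.inl 1)))}.ncard =
      Nat.factorial q * (q - 1) ^ (n - d) * 2 ^ (d - q) := by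
  classical
  obtain ⟨e, he⟩ : ∃ e, n - d - 1 = e := ⟨_, rfl⟩
  have hnd : n - d = e + 1 := by omega
  constructor
  · rw [← Nat.card_coe_set_eq, Set.coe_setOf]
    rw [Nat.card_congr (bigEquiv q d n (fun x y => x ≠ y))]
    rw [card_dep_prod (CoreP (fun x y : Fin q => x ≠ y)) FibP
      (1 ^ (d-q+1) * ((q-1) * (q-1) ^ (n-d-1)))
      (fun c hc => fib_card hq c 1
        ((allowed_card hq c.1 hc.1 c.2.1 c.2.2 hc.2.1 hc.2.2.1).1 hc.2.2.2))]
    rw [core_card_ne hq, fact_eq_six hq, he, hnd, pow_succ, one_pow]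
    ring
  · rw [← Nat.card_coe_set_eq, Set.coe_setOf]
    rw [Nat.card_congr (bigEquiv q d n (fun x y => x = y))]
    rw [card_dep_prod (CoreP (fun x y : Fin q => x = y)) FibP
      (2 ^ (d-q+1) * ((q-1) * (q-1) ^ (n-d-1)))
      (fun c hc => fib_card hq c 2
        ((allowed_card hq c.1 hc.1 c.2.1 c.2.2 hc.2.1 hc.2.2.1).2 hc.2.2.2))]
    rw [core_card_eq hq, fact_eq_six hq, he, hnd]
    have h2p : 2 ^ (d-q+1) = 2 * 2 ^ (d-q) := by rw [pow_succ]; ring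
    rw [h2p, pow_succ]
    ring
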